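/- Let X ⊂ ℝ² be a finite set with |X| = n ≥ 3, let K = ⋂_{x∈X} B(x,1) be the intersection of the closed unit disks centered at the points of X, and suppose K has nonempty interior. Call a point p ∈ ∂K a vertex of K if there are at least two points x ∈ X with dist(p,x) = 1. If the set of vertices of K is exactly X (so K is a Reuleaux polygon with vertex set X), then n is odd. -/

import Mathlib

/- Auxiliary setup: coordinates in `EuclideanSpace ℝ (Fin 2)` -/
abbrev Pt := EuclideanSpace ℝ (Fin 2)

noncomputable def LL (p y2 w : Pt) : ℝ :=
  (y2 0 - p 0)*(w 1 - p 1) - (y2 1 - p 1)*(w 0 - p 0)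


lemma dist_coord (x y : Pt) : dist x y = Real.sqrt ((x 0 - y 0)^2 + (x 1 - y 1)^2) := by
  rw [EuclideanSpace.dist_eq]
  congr 1
  rw [Fin.sum_univ_two]
  simp [Real.dist_eq, sq_abs]

lemma dist_eq_one_iff (x y : Pt) : dist x y = 1 ↔ (x 0 - y 0)^2 + (x 1 - y 1)^2 = 1 := by
  rw [dist_coord]
  constructor
  · intro h
    have h0 : (0:ℝ) ≤ (x 0 - y 0)^2 + (x 1 - y 1)^2 := by positivity
    nlinarith [Real.sq_sqrt h0, h]
  · intro h; rw [h]; simp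

lemma dist_le_one_iff (x y : Pt) : dist x y ≤ 1 ↔ (x 0 - y 0)^2 + (x 1 - y 1)^2 ≤ 1 := by
  rw [dist_coord]
  have h0 : (0:ℝ) ≤ (x 0 - y 0)^2 + (x 1 - y 1)^2 := by positivity
  constructor
  · intro h
    nlinarith [Real.sq_sqrt h0, Real.sqrt_nonneg ((x 0 - y 0)^2 + (x 1 - y 1)^2)]
  · intro h
    calc Real.sqrt ((x 0 - y 0)^2 + (x 1 - y 1)^2) ≤ Real.sqrt 1 := Real.sqrt_le_sqrt h
    _ = 1 := Real.sqrt_one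

lemma key_ineq (a b c d : ℝ) (hc : 0 < c) (hd : 0 < d)
    (h1 : c^2 ≤ a*(2-a)) (h2 : c^2 ≤ 1-a^2)
    (h3 : d^2 ≤ b*(2-b)) (h4 : d^2 ≤ 1-b^2) :
    (a+b-1)^2 + (c-d)^2 < 1 := by
  have ha1 : 0 < a := by nlinarith
  have ha2 : a < 1 := by nlinarith
  have hb1 : 0 < b := by nlinarith
  have hb2 : b < 1 := by nlinarith
  have expand : (a+b-1)^2 = 1 - (a+b)*(2-(a+b)) := by ring
  rcases le_total c d with hcd | hcd
  · have key : (c-d)^2 < d^2 := by nlinarith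
    rcases le_total (a+b) 1 with hs | hs
    · have h5 : b*(2-b) ≤ (a+b)*(2-(a+b)) := by
        nlinarith [mul_nonneg ha1.le (show (0:ℝ) ≤ 2-a-2*b by nlinarith)]
      linarith
    · have h5 : 1-b^2 ≤ (a+b)*(2-(a+b)) := by
        nlinarith [mul_nonneg (show (0:ℝ) ≤ b+1-(a+b) by nlinarith)
          (show (0:ℝ) ≤ (a+b)-(1-b) by nlinarith)]
      linarith
  · have key : (c-d)^2 < c^2 := by nlinarith
    rcases le_total (a+b) 1 with hs | hs
    · have h5 : a*(2-a) ≤ (a+b)*(2-(a+b)) := by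
        nlinarith [mul_nonneg hb1.le (show (0:ℝ) ≤ 2-b-2*a by nlinarith)]
      linarith
    · have h5 : 1-a^2 ≤ (a+b)*(2-(a+b)) := by
        nlinarith [mul_nonneg (show (0:ℝ) ≤ a+1-(a+b) by nlinarith)
          (show (0:ℝ) ≤ (a+b)-(1-a) by nlinarith)]
      linarith

lemma same_side (a0 a1 b0 b1 c0 c1 d0 d1 : ℝ)
    (hAB : (b0-a0)^2+(b1-a1)^2 = 1)
    (hCD : (c0-d0)^2+(c1-d1)^2 = 1)
    (hCA : (c0-a0)^2+(c1-a1)^2 ≤ 1) (hCB : (c0-b0)^2+(c1-b1)^2 ≤ 1)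
    (hDA : (d0-a0)^2+(d1-a1)^2 ≤ 1) (hDB : (d0-b0)^2+(d1-b1)^2 ≤ 1)
    (hsign : 0 < ((b0-a0)*(c1-a1) - (b1-a1)*(c0-a0)) * ((b0-a0)*(d1-a1) - (b1-a1)*(d0-a0))) :
    False := by
  set c2 := (b0-a0)*(c1-a1) - (b1-a1)*(c0-a0) with hc2
  set d2 := (b0-a0)*(d1-a1) - (b1-a1)*(d0-a0) with hd2
  set a := (b0-a0)*(c0-a0) + (b1-a1)*(c1-a1) with ha
  set a' := (b0-a0)*(d0-a0) + (b1-a1)*(d1-a1) with ha'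
  have idC : a^2+c2^2 = (c0-a0)^2+(c1-a1)^2 := by
    rw [hc2, ha]; linear_combination ((c0-a0)^2+(c1-a1)^2) * hAB
  have idD : a'^2+d2^2 = (d0-a0)^2+(d1-a1)^2 := by
    rw [hd2, ha']; linear_combination ((d0-a0)^2+(d1-a1)^2) * hAB
  have idCB : (c0-b0)^2+(c1-b1)^2 = ((c0-a0)^2+(c1-a1)^2) - 2*a + 1 := by
    rw [ha]; linear_combination hAB
  have idDB : (d0-b0)^2+(d1-b1)^2 = ((d0-a0)^2+(d1-a1)^2) - 2*a' + 1 := by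
    rw [ha']; linear_combination hAB
  have idCD : (a-a')^2 + (c2-d2)^2 = (c0-d0)^2+(c1-d1)^2 := by
    rw [hc2, hd2, ha, ha']; linear_combination ((c0-d0)^2+(c1-d1)^2) * hAB
  have h2 : c2^2 ≤ 1-a^2 := by linarith [idC, hCA]
  have h1 : c2^2 ≤ a*(2-a) := by
    have e : a*(2-a) = 2*a - a^2 := by ring
    rw [e]; linarith [idC, idCB, hCB]
  have h4 : d2^2 ≤ 1-(1-a')^2 := by
    have e : 1-(1-a')^2 = 2*a' - a'^2 := by ring
    rw [e]; linarith [idD, idDB, hDB]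
  have h3 : d2^2 ≤ (1-a')*(2-(1-a')) := by
    have e : (1-a')*(2-(1-a')) = 1 - a'^2 := by ring
    rw [e]; linarith [idD, hDA]
  have hfin : (a + (1-a') - 1)^2 + (c2-d2)^2 = 1 := by
    have : (a + (1-a') - 1)^2 = (a-a')^2 := by ring
    rw [this, idCD, hCD]
  clear_value c2 d2 a a'
  clear hc2 hd2 ha ha' hAB hCD hCA hCB hDA hDB idC idD idCB idDB idCD
  rcases lt_or_gt_of_ne (fun h : c2 = 0 => by simp [h] at hsign) with hneg | hpos
  · have hd2neg : d2 < 0 := by nlinarith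
    have := key_ineq a (1-a') (-c2) (-d2) (by linarith) (by linarith)
      (by nlinarith) (by nlinarith) (by nlinarith) (by nlinarith)
    nlinarith
  · have hd2pos : 0 < d2 := by nlinarith
    have := key_ineq a (1-a') c2 d2 hpos hd2pos h1 h2 h3 h4
    nlinarith

lemma on_seg (A B P : Pt) (hAB : dist A B = 1) (hPA : dist P A ≤ 1) (hPB : dist P B ≤ 1)
    (hcr : (B 0 - A 0)*(P 1 - A 1) - (B 1 - A 1)*(P 0 - A 0) = 0) :
    P ∈ segment ℝ A B := by
  rw [dist_eq_one_iff] at hAB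
  rw [dist_le_one_iff] at hPA hPB
  set t := (B 0 - A 0)*(P 0 - A 0) + (B 1 - A 1)*(P 1 - A 1) with ht
  have w0eq : P 0 - A 0 = t*(B 0 - A 0) := by
    rw [ht]; linear_combination (-(P 0 - A 0))*hAB - (B 1 - A 1)*hcr
  have w1eq : P 1 - A 1 = t*(B 1 - A 1) := by
    rw [ht]; linear_combination (-(P 1 - A 1))*hAB + (B 0 - A 0)*hcr
  have ht2 : t^2 ≤ 1 := by
    have e : (t*(B 0 - A 0))^2+(t*(B 1 - A 1))^2 = t^2 := by
      linear_combination t^2 * hAB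
    rw [w0eq, w1eq] at hPA; linarith
  have ht2' : (t-1)^2 ≤ 1 := by
    have w0B : P 0 - B 0 = (t-1)*(B 0 - A 0) := by linarith [w0eq]
    have w1B : P 1 - B 1 = (t-1)*(B 1 - A 1) := by linarith [w1eq]
    have e : ((t-1)*(B 0 - A 0))^2+((t-1)*(B 1 - A 1))^2 = (t-1)^2 := by
      linear_combination (t-1)^2 * hAB
    rw [w0B, w1B] at hPB; linarith
  have ht0 : 0 ≤ t := by nlinarith
  have ht1 : t ≤ 1 := by nlinarith
  refine ⟨1-t, t, by linarith, ht0, by ring, ?_⟩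
  ext i
  fin_cases i <;>
    simp [PiLp.add_apply, PiLp.smul_apply, smul_eq_mul] <;> linarith [w0eq, w1eq]

lemma seg_inter (A B C D : Pt) (hAB : dist A B = 1) (hCD : dist C D = 1)
    (hCA : dist C A ≤ 1) (hCB : dist C B ≤ 1) (hDA : dist D A ≤ 1) (hDB : dist D B ≤ 1) :
    (segment ℝ A B ∩ segment ℝ C D).Nonempty := by
  set c2 := (B 0 - A 0)*(C 1 - A 1) - (B 1 - A 1)*(C 0 - A 0) with hc2
  set d2 := (B 0 - A 0)*(D 1 - A 1) - (B 1 - A 1)*(D 0 - A 0) with hd2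
  rcases lt_trichotomy (c2*d2) 0 with hlt | heq | hgt
  · -- opposite sides: crossing point
    have hden : d2 - c2 ≠ 0 := by
      intro h
      have : d2 = c2 := by linarith
      rw [this] at hlt; nlinarith
    set t := c2/(c2-d2) with htdef
    have hc2d2 : c2 - d2 ≠ 0 := fun h => hden (by linarith)
    have talt : t = (-c2)/(d2-c2) := by
      rw [htdef, ← neg_div_neg_eq]; ring_nf
    have hbounds : 0 ≤ t ∧ t ≤ 1 := by
      rcases mul_neg_iff.1 hlt with ⟨hc, hd⟩ | ⟨hc, hd⟩
      · have hpos : 0 < c2 - d2 := by linarith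
        exact ⟨(div_pos hc hpos).le, (div_le_one hpos).2 (by linarith)⟩
      · have hpos : 0 < d2 - c2 := by linarith
        rw [talt]
        exact ⟨(div_pos (by linarith) hpos).le, (div_le_one hpos).2 (by linarith)⟩
    obtain ⟨ht0, ht1⟩ := hbounds
    set P : Pt := (1-t) • C + t • D with hP
    have hPseg : P ∈ segment ℝ C D := ⟨1-t, t, by linarith, ht0, by ring, rfl⟩
    have hPcoord : ∀ i, P i = (1-t) * C i + t * D i := by
      intro i; rw [hP]; simp
    have hPA' : dist P A ≤ 1 := by
      have := (convex_closedBall A 1).segment_subset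
        (Metric.mem_closedBall.2 hCA) (Metric.mem_closedBall.2 hDA) hPseg
      exact Metric.mem_closedBall.1 this
    have hPB' : dist P B ≤ 1 := by
      have := (convex_closedBall B 1).segment_subset
        (Metric.mem_closedBall.2 hCB) (Metric.mem_closedBall.2 hDB) hPseg
      exact Metric.mem_closedBall.1 this
    have hcross : (B 0 - A 0)*(P 1 - A 1) - (B 1 - A 1)*(P 0 - A 0) = 0 := by
      rw [hPcoord 0, hPcoord 1]
      have : (B 0 - A 0)*((1-t) * C 1 + t * D 1 - A 1) - (B 1 - A 1)*((1-t) * C 0 + t * D 0 - A 0)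
          = (1-t)*c2 + t*d2 := by rw [hc2, hd2]; ring
      rw [this, htdef]
      field_simp
      ring
    exact ⟨P, on_seg A B P hAB hPA' hPB' hcross, hPseg⟩
  · -- one of them on the line
    rcases mul_eq_zero.1 heq with h | h
    · exact ⟨C, on_seg A B C hAB hCA hCB (by rw [← hc2]; exact h), left_mem_segment ℝ C D⟩
    · exact ⟨D, on_seg A B D hAB hDA hDB (by rw [← hd2]; exact h), right_mem_segment ℝ C D⟩
  · exfalso
    exact same_side (A 0) (A 1) (B 0) (B 1) (C 0) (C 1) (D 0) (D 1)
      (by rw [← dist_eq_one_iff]; rw [dist_comm]; exact hAB)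
      ((dist_eq_one_iff C D).1 hCD)
      ((dist_le_one_iff C A).1 hCA) ((dist_le_one_iff C B).1 hCB)
      ((dist_le_one_iff D A).1 hDA) ((dist_le_one_iff D B).1 hDB)
      (by rw [← hc2, ← hd2]; exact hgt)

lemma LL_comb (p y2 u v : Pt) (a b : ℝ) (hab : a + b = 1) :
    LL p y2 ((a:ℝ) • u + b • v) = a * LL p y2 u + b * LL p y2 v := by
  have h0 : ((a:ℝ) • u + b • v) 0 = a * u 0 + b * v 0 := by simp
  have h1 : ((a:ℝ) • u + b • v) 1 = a * u 1 + b * v 1 := by simp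
  unfold LL
  rw [h0, h1]
  have ha : a = 1 - b := by linarith
  rw [ha]; ring

lemma LL_self (p y2 : Pt) : LL p y2 y2 = 0 := by unfold LL; ring

-- helper: if L y and L z have opposite signs, segments [p,y] and [y2,z] can't meet
lemma half_contra (p y2 y z : Pt) (h2 : dist p y2 = 1)
    (hopp : LL p y2 y * LL p y2 z < 0)
    (hmeet : (segment ℝ p y ∩ segment ℝ y2 z).Nonempty) : False := by
  obtain ⟨q, ⟨a, b, ha, hb, hab, hq⟩, ⟨a', b', ha', hb', hab', hq'⟩⟩ := hmeet
  have e1 : LL p y2 q = b * LL p y2 y := by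
    rw [← hq, LL_comb p y2 p y a b hab]
    have : LL p y2 p = 0 := by unfold LL; ring
    rw [this]; ring
  have e2 : LL p y2 q = b' * LL p y2 z := by
    rw [← hq', LL_comb p y2 y2 z a' b' hab', LL_self]; ring
  have hy0 : LL p y2 y ≠ 0 := by intro h; rw [h] at hopp; simp at hopp
  have hz0 : LL p y2 z ≠ 0 := by intro h; rw [h] at hopp; simp at hopp
  have hbb : b * LL p y2 y * (b' * LL p y2 z) ≤ 0 := by
    have := mul_nonneg (mul_nonneg hb hb') (le_of_lt (neg_pos.2 hopp))
    nlinarith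
  have hsq : b * LL p y2 y * (b' * LL p y2 z) = (b * LL p y2 y)^2 := by
    rw [← e1, ← e2]; ring
  have hbLy : b * LL p y2 y = 0 := by nlinarith [sq_nonneg (b * LL p y2 y)]
  have hb0 : b = 0 := by
    rcases mul_eq_zero.1 hbLy with h | h
    · exact h
    · exact absurd h hy0
  have hb'0 : b' = 0 := by
    have : b' * LL p y2 z = 0 := by rw [← e2, e1, hb0]; ring
    rcases mul_eq_zero.1 this with h | h
    · exact h
    · exact absurd h hz0
  -- then q = p and q = y2
  have hqp : q = p := by
    rw [← hq, hb0, show a = 1 by linarith]; simp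
  have hqy2 : q = y2 := by
    rw [← hq', hb'0, show a' = 1 by linarith]; simp
  have : dist p y2 = 0 := by rw [← hqp, ← hqy2]; simp
  rw [h2] at this; norm_num at this

lemma line_case (p y2 z : Pt) (h2 : dist p y2 = 1) (hz : dist y2 z = 1)
    (hzp : dist z p ≤ 1) (hL : LL p y2 z = 0) : z = p := by
  rw [dist_eq_one_iff] at h2 hz
  rw [dist_le_one_iff] at hzp
  unfold LL at hL
  set τ := (y2 0 - p 0)*(z 0 - p 0) + (y2 1 - p 1)*(z 1 - p 1) with hτ
  have w0eq : z 0 - p 0 = τ*(y2 0 - p 0) := by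
    rw [hτ]; linear_combination (-(z 0 - p 0))*h2 - (y2 1 - p 1)*hL
  have w1eq : z 1 - p 1 = τ*(y2 1 - p 1) := by
    rw [hτ]; linear_combination (-(z 1 - p 1))*h2 + (y2 0 - p 0)*hL
  have hττ : τ^2 ≤ 1 := by
    have e : (τ*(y2 0 - p 0))^2+(τ*(y2 1 - p 1))^2 = τ^2 := by
      linear_combination τ^2 * h2
    rw [w0eq, w1eq] at hzp; linarith
  have hτ1 : (τ-1)^2 = 1 := by
    have w0B : y2 0 - z 0 = (1-τ)*(y2 0 - p 0) := by linarith [w0eq]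
    have w1B : y2 1 - z 1 = (1-τ)*(y2 1 - p 1) := by linarith [w1eq]
    have e : ((1-τ)*(y2 0 - p 0))^2+((1-τ)*(y2 1 - p 1))^2 = (τ-1)^2 := by
      linear_combination (τ-1)^2 * h2
    rw [w0B, w1B] at hz; linarith
  have hτ0 : τ = 0 := by
    rcases mul_eq_zero.1 (show τ*(τ-2) = 0 by nlinarith [hτ1]) with h | h
    · exact h
    · exfalso; nlinarith
  ext i
  fin_cases i
  · show z 0 = p 0; rw [hτ0] at w0eq; linarith
  · show z 1 = p 1; rw [hτ0] at w1eq; linarith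

lemma middle_contra (p y1 y2 y3 z : Pt)
    (h1 : dist p y1 = 1) (h2 : dist p y2 = 1) (h3 : dist p y3 = 1) (hz : dist y2 z = 1)
    (h21 : dist y2 y1 ≤ 1) (h23 : dist y2 y3 ≤ 1)
    (hzp : dist z p ≤ 1) (hz1 : dist z y1 ≤ 1) (hz3 : dist z y3 ≤ 1)
    (hm : LL p y2 y1 * LL p y2 y3 < 0) (hznp : z ≠ p) : False := by
  have hmeet1 : (segment ℝ p y1 ∩ segment ℝ y2 z).Nonempty :=
    seg_inter p y1 y2 z h1 hz (le_of_eq (by rw [dist_comm, h2])) h21 hzp hz1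
  have hmeet3 : (segment ℝ p y3 ∩ segment ℝ y2 z).Nonempty :=
    seg_inter p y3 y2 z h3 hz (le_of_eq (by rw [dist_comm, h2])) h23 hzp hz3
  set α := LL p y2 y1
  set β := LL p y2 y3
  set γ := LL p y2 z with hγ
  have hα : α ≠ 0 := fun h => by rw [h] at hm; simp at hm
  have hβ : β ≠ 0 := fun h => by rw [h] at hm; simp at hm
  rcases lt_trichotomy γ 0 with hg | hg | hg
  · -- γ ≠ 0 : one of α, β has opposite sign to γ
    rcases lt_trichotomy α 0 with ha | ha | ha
    · -- α < 0, γ < 0 ⇒ β > 0 ⇒ β*γ < 0 : use hmeet3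
      exact half_contra p y2 y3 z h2 (by nlinarith) hmeet3
    · exact absurd ha hα
    · exact half_contra p y2 y1 z h2 (by nlinarith) hmeet1
  · exact hznp (line_case p y2 z h2 hz hzp hg)
  · rcases lt_trichotomy α 0 with ha | ha | ha
    · exact half_contra p y2 y1 z h2 (by nlinarith) hmeet1
    · exact absurd ha hα
    · exact half_contra p y2 y3 z h2 (by nlinarith) hmeet3

lemma sq_le_one_ub {t : ℝ} (h : t^2 ≤ 1) : t ≤ 1 := by nlinarith
lemma sq_shift_lb {t : ℝ} (h : (t-1)^2 ≤ 1) : 0 ≤ t := by nlinarith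
lemma tiny_final {t s : ℝ} (h1 : 2*t*s + t^2 ≤ 0) (h2 : 2*(t-1)*s + (t-1)^2 ≤ 0)
    (h3 : 0 < t) (h4 : t < 1) : False := by
  nlinarith [mul_le_mul_of_nonneg_left h1 (show (0:ℝ) ≤ 1-t by linarith),
    mul_le_mul_of_nonneg_left h2 h3.le, mul_pos h3 (show (0:ℝ) < 1-t by linarith)]

lemma pt_ext (x y : Pt) (h0 : x 0 = y 0) (h1 : x 1 = y 1) : x = y := by
  ext i; fin_cases i <;> assumption

lemma unit_cross_zero (p u v : Pt) (hu : dist p u = 1) (hv : dist p v = 1)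
    (huv : dist u v ≤ 1) (hL : LL p u v = 0) : v = u := by
  rw [dist_eq_one_iff] at hu hv
  rw [dist_le_one_iff] at huv
  unfold LL at hL
  set τ := (u 0 - p 0)*(v 0 - p 0) + (u 1 - p 1)*(v 1 - p 1) with hτ
  have w0eq : v 0 - p 0 = τ*(u 0 - p 0) := by
    rw [hτ]; linear_combination (-(v 0 - p 0))*hu - (u 1 - p 1)*hL
  have w1eq : v 1 - p 1 = τ*(u 1 - p 1) := by
    rw [hτ]; linear_combination (-(v 1 - p 1))*hu + (u 0 - p 0)*hL
  have hvcoord : (v 0 - p 0)^2 + (v 1 - p 1)^2 = 1 := by linear_combination hv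
  have hτsq : τ^2 = 1 := by
    have e : (τ*(u 0 - p 0))^2+(τ*(u 1 - p 1))^2 = τ^2 := by linear_combination τ^2 * hu
    rw [w0eq, w1eq] at hvcoord; linarith
  have huvcoord : (u 0 - v 0)^2 + (u 1 - v 1)^2 ≤ 1 := by linarith [huv]
  have hone : (u 0 - v 0) = (1-τ)*(u 0 - p 0) := by linarith [w0eq]
  have hone' : (u 1 - v 1) = (1-τ)*(u 1 - p 1) := by linarith [w1eq]
  have e2 : ((1-τ)*(u 0 - p 0))^2+((1-τ)*(u 1 - p 1))^2 = (1-τ)^2 := by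
    linear_combination (1-τ)^2 * hu
  rw [hone, hone'] at huvcoord
  have hτ1 : τ = 1 := by
    have h' : (1-τ)^2 ≤ 1 := by linarith [e2, huvcoord]
    have hm : (τ-1)*(τ+1) = 0 := by linear_combination hτsq
    rcases mul_eq_zero.1 hm with h | h
    · linarith
    · exfalso
      have hτm : τ = -1 := by linarith
      rw [hτm] at h'; norm_num at h'
  apply pt_ext
  · rw [hτ1] at w0eq; linarith
  · rw [hτ1] at w1eq; linarith

set_option maxHeartbeats 1000000 in
lemma off_line (A B v w : Pt) (hAB : dist A B = 1) (hvA : dist v A ≤ 1) (hvB : dist v B ≤ 1)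
    (hw : dist v w = 1) (hwA : dist w A ≤ 1) (hwB : dist w B ≤ 1)
    (hvAne : v ≠ A) (hvBne : v ≠ B) : LL A B v ≠ 0 := by
  intro hL
  rw [dist_eq_one_iff] at hAB hw
  rw [dist_le_one_iff] at hvA hvB hwA hwB
  unfold LL at hL
  have hAB' : (B 0 - A 0)^2 + (B 1 - A 1)^2 = 1 := by linear_combination hAB
  have hw' : (w 0 - v 0)^2 + (w 1 - v 1)^2 = 1 := by linear_combination hw
  have hvA' : (v 0 - A 0)^2 + (v 1 - A 1)^2 ≤ 1 := by linarith [hvA]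
  have hvB'' : (v 0 - B 0)^2 + (v 1 - B 1)^2 ≤ 1 := by linarith [hvB]
  have hwA' : (w 0 - A 0)^2 + (w 1 - A 1)^2 ≤ 1 := by linarith [hwA]
  have hwB' : (w 0 - B 0)^2 + (w 1 - B 1)^2 ≤ 1 := by linarith [hwB]
  set τ := (B 0 - A 0)*(v 0 - A 0) + (B 1 - A 1)*(v 1 - A 1) with hτ
  have w0eq : v 0 - A 0 = τ*(B 0 - A 0) := by
    rw [hτ]; linear_combination (-(v 0 - A 0))*hAB' - (B 1 - A 1)*hL
  have w1eq : v 1 - A 1 = τ*(B 1 - A 1) := by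
    rw [hτ]; linear_combination (-(v 1 - A 1))*hAB' + (B 0 - A 0)*hL
  clear_value τ
  clear hτ hL
  have hτsq : τ^2 ≤ 1 := by
    have e : (τ*(B 0 - A 0))^2+(τ*(B 1 - A 1))^2 = τ^2 := by linear_combination τ^2 * hAB'
    rw [w0eq, w1eq] at hvA'; linarith
  have hτsq' : (τ-1)^2 ≤ 1 := by
    have b0 : v 0 - B 0 = (τ-1)*(B 0 - A 0) := by linarith [w0eq]
    have b1 : v 1 - B 1 = (τ-1)*(B 1 - A 1) := by linarith [w1eq]
    have e : ((τ-1)*(B 0 - A 0))^2+((τ-1)*(B 1 - A 1))^2 = (τ-1)^2 := by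
      linear_combination (τ-1)^2 * hAB'
    rw [b0, b1] at hvB''; linarith
  have hτpos : 0 < τ := by
    rcases lt_or_eq_of_le (sq_shift_lb hτsq') with h | h
    · exact h
    · exfalso; apply hvAne; apply pt_ext
      · rw [← h] at w0eq; linarith
      · rw [← h] at w1eq; linarith
  have hτlt1 : τ < 1 := by
    rcases lt_or_eq_of_le (sq_le_one_ub hτsq) with h | h
    · exact h
    · exfalso; apply hvBne; apply pt_ext
      · rw [h] at w0eq; linarith
      · rw [h] at w1eq; linarith
  set s := (B 0 - A 0)*(w 0 - v 0) + (B 1 - A 1)*(w 1 - v 1) with hs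
  clear_value s
  have eA0 : w 0 - A 0 = (w 0 - v 0) + τ*(B 0 - A 0) := by linarith [w0eq]
  have eA1 : w 1 - A 1 = (w 1 - v 1) + τ*(B 1 - A 1) := by linarith [w1eq]
  have eB0 : w 0 - B 0 = (w 0 - v 0) + (τ-1)*(B 0 - A 0) := by linarith [w0eq]
  have eB1 : w 1 - B 1 = (w 1 - v 1) + (τ-1)*(B 1 - A 1) := by linarith [w1eq]
  rw [eA0, eA1] at hwA'
  rw [eB0, eB1] at hwB'
  have expA : ((w 0 - v 0) + τ*(B 0 - A 0))^2 + ((w 1 - v 1) + τ*(B 1 - A 1))^2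
      = ((w 0 - v 0)^2 + (w 1 - v 1)^2) + 2*τ*s + τ^2*((B 0 - A 0)^2 + (B 1 - A 1)^2) := by
    rw [hs]; ring
  have expB : ((w 0 - v 0) + (τ-1)*(B 0 - A 0))^2 + ((w 1 - v 1) + (τ-1)*(B 1 - A 1))^2
      = ((w 0 - v 0)^2 + (w 1 - v 1)^2) + 2*(τ-1)*s + (τ-1)^2*((B 0 - A 0)^2 + (B 1 - A 1)^2) := by
    rw [hs]; ring
  have eτ : τ^2*((B 0 - A 0)^2 + (B 1 - A 1)^2) = τ^2 := by rw [hAB']; ring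
  have eτ' : (τ-1)^2*((B 0 - A 0)^2 + (B 1 - A 1)^2) = (τ-1)^2 := by rw [hAB']; ring
  have key1 : 2*τ*s + τ^2 ≤ 0 := by linarith [hwA', expA, hw', eτ]
  have key2 : 2*(τ-1)*s + (τ-1)^2 ≤ 0 := by linarith [hwB', expB, hw', eτ']
  exact tiny_final key1 key2 hτpos hτlt1

lemma LL_antisymm (p u v : Pt) : LL p u v = - LL p v u := by unfold LL; ring

lemma no_three (p y1 y2 y3 : Pt)
    (h1 : dist p y1 = 1) (h2 : dist p y2 = 1) (h3 : dist p y3 = 1)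
    (h12 : dist y1 y2 ≤ 1) (h13 : dist y1 y3 ≤ 1) (h23 : dist y2 y3 ≤ 1)
    (n12 : y1 ≠ y2) (n13 : y1 ≠ y3) (n23 : y2 ≠ y3)
    (hnb : ∀ m, (m = y1 ∨ m = y2 ∨ m = y3) →
      ∃ z, z ≠ p ∧ dist m z = 1 ∧ dist z p ≤ 1 ∧ dist z y1 ≤ 1 ∧ dist z y2 ≤ 1 ∧ dist z y3 ≤ 1) :
    False := by
  set a := LL p y1 y2 with ha
  set b := LL p y2 y3 with hb
  set c := LL p y3 y1 with hc
  have hA : a ≠ 0 := fun h => n12 ((unit_cross_zero p y1 y2 h1 h2 h12 h).symm)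
  have hB : b ≠ 0 := fun h => n23 ((unit_cross_zero p y2 y3 h2 h3 h23 h).symm)
  have hC : c ≠ 0 := fun h => n13 (unit_cross_zero p y3 y1 h3 h1 (by rw [dist_comm]; exact h13) h)
  -- two of a,b,c share a sign
  have htwo : 0 < a*b ∨ 0 < b*c ∨ 0 < c*a := by
    rcases lt_trichotomy (a*b) 0 with hab | hab | hab
    · rcases lt_trichotomy (b*c) 0 with hbc | hbc | hbc
      · right; right; nlinarith [sq_nonneg b, mul_pos (neg_pos.2 hab) (neg_pos.2 hbc),
          (show b^2 > 0 from by positivity)]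
      · exact absurd (mul_eq_zero.1 hbc) (by push_neg; exact ⟨hB, hC⟩)
      · right; left; exact hbc
    · exact absurd (mul_eq_zero.1 hab) (by push_neg; exact ⟨hA, hB⟩)
    · left; exact hab
  rcases htwo with h | h | h
  · -- middle y2
    obtain ⟨z, hzne, hz1', hz2', hz3', hz4', hz5'⟩ := hnb y2 (Or.inr (Or.inl rfl))
    refine middle_contra p y1 y2 y3 z h1 h2 h3 hz1' (by rw [dist_comm]; exact h12) h23
      hz2' hz3' hz5' ?_ hzne
    have e : LL p y2 y1 = -a := by rw [ha]; exact LL_antisymm p y2 y1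
    rw [e]; nlinarith
  · -- middle y3
    obtain ⟨z, hzne, hz1', hz2', hz3', hz4', hz5'⟩ := hnb y3 (Or.inr (Or.inr rfl))
    refine middle_contra p y2 y3 y1 z h2 h3 h1 hz1' (by rw [dist_comm]; exact h23)
      (by rw [dist_comm]; exact h13) hz2' hz4' hz3' ?_ hzne
    have e : LL p y3 y2 = -b := by rw [hb]; exact LL_antisymm p y3 y2
    rw [e, ← hc]; nlinarith
  · -- middle y1
    obtain ⟨z, hzne, hz1', hz2', hz3', hz4', hz5'⟩ := hnb y1 (Or.inl rfl)
    refine middle_contra p y3 y1 y2 z h3 h1 h2 hz1' h13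
      h12 hz2' hz5' hz4' ?_ hzne
    have e : LL p y1 y3 = -c := by rw [hc]; exact LL_antisymm p y1 y3
    rw [e, ← ha]; nlinarith

lemma LL_base (p y2 : Pt) : LL p y2 p = 0 := by unfold LL; ring

lemma opp_sides (A B v w : Pt) (hAB : dist A B = 1) (hvw : dist v w = 1)
    (hvA : dist v A ≤ 1) (hvB : dist v B ≤ 1) (hwA : dist w A ≤ 1) (hwB : dist w B ≤ 1)
    (hLv : LL A B v ≠ 0) (hLw : LL A B w ≠ 0) :
    LL A B v * LL A B w < 0 := by
  rcases lt_trichotomy (LL A B v * LL A B w) 0 with h | h | h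
  · exact h
  · exact absurd (mul_eq_zero.1 h) (by push_neg; exact ⟨hLv, hLw⟩)
  · exfalso
    obtain ⟨q, ⟨α, β, hα, hβ, hαβ, hq⟩, ⟨a', b', ha', hb', hab', hq'⟩⟩ :=
      seg_inter A B v w hAB hvw hvA hvB hwA hwB
    have e0 : LL A B q = 0 := by
      rw [← hq, LL_comb A B A B α β hαβ, LL_self, LL_base]; ring
    have e1 : a' * LL A B v + b' * LL A B w = 0 := by
      rw [← LL_comb A B v w a' b' hab', hq', e0]
    have hsub : b' * LL A B w = -(a' * LL A B v) := by linarith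
    have hprod : (a' * LL A B v) * (b' * LL A B w) ≤ 0 := by
      rw [hsub]; nlinarith [sq_nonneg (a' * LL A B v)]
    have hprod2 : (0:ℝ) ≤ (a' * LL A B v) * (b' * LL A B w) := by
      have : (a' * LL A B v) * (b' * LL A B w) = (a'*b') * (LL A B v * LL A B w) := by ring
      rw [this]; exact mul_nonneg (mul_nonneg ha' hb') h.le
    have hzero : a' * LL A B v = 0 := by
      have hrw : a' * LL A B v * (b' * LL A B w) = -((a' * LL A B v)^2) := by rw [hsub]; ring
      have hsq : (a' * LL A B v)^2 = 0 := by linarith [hprod, hprod2, hrw]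
      exact sq_eq_zero_iff.1 hsq
    have ha'0 : a' = 0 := by
      rcases mul_eq_zero.1 hzero with h' | h'
      · exact h'
      · exact absurd h' hLv
    have : b' * LL A B w = 0 := by linarith [e1, hzero]
    rcases mul_eq_zero.1 this with h' | h'
    · rw [ha'0] at hab'; simp at hab'; exact absurd h' (by rw [hab']; norm_num)
    · exact absurd h' hLw

open Classical in
/-- Let `X ⊂ ℝ²` be a finite set of `n ≥ 3` points and let `K` be the
intersection of the closed unit disks centered at the points of `X`, with nonempty
interior.  A point `p` of the frontier of `K` is a *vertex* of `K` if at least two points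
of `X` are at distance `1` from `p`.  If the set of vertices of `K` is exactly `X` (`K`
is a Reuleaux polygon with vertex set `X`), then `n` is odd. -/
theorem reuleaux_polygon_vertices_odd
    (X : Finset (EuclideanSpace ℝ (Fin 2)))
    (hn : 3 ≤ X.card)
    (K : Set (EuclideanSpace ℝ (Fin 2)))
    (hK : K = ⋂ x ∈ X, Metric.closedBall x 1)
    (hint : (interior K).Nonempty)
    (hvert : ∀ p : EuclideanSpace ℝ (Fin 2),
      (p ∈ frontier K ∧ 2 ≤ (X.filter fun x => dist p x = 1).card) ↔ p ∈ X) :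
    Odd X.card := by
  classical
  have hKclosed : IsClosed K := by
    rw [hK]; exact isClosed_biInter (fun x _ => Metric.isClosed_closedBall)
  have hXK : ∀ x ∈ X, x ∈ K := fun x hx => hKclosed.frontier_subset ((hvert x).2 hx).1
  have hdist : ∀ x ∈ X, ∀ y ∈ X, dist x y ≤ 1 := by
    intro x hx y hy
    have hK' : K ⊆ Metric.closedBall y 1 := by
      rw [hK]; exact Set.biInter_subset_of_mem hy
    exact Metric.mem_closedBall.1 (hK' (hXK x hx))
  set D : Pt → Finset Pt := fun p => X.filter (fun x => dist p x = 1) with hDdef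
  have hmemD : ∀ p q : Pt, q ∈ D p ↔ q ∈ X ∧ dist p q = 1 := fun p q => Finset.mem_filter
  have hdl : ∀ p ∈ X, 2 ≤ (D p).card := by
    intro p hp
    have := ((hvert p).2 hp).2
    convert this using 2
  -- neighbor exists avoiding any given point
  have hnbgen : ∀ m ∈ X, ∀ p : Pt, ∃ z, z ∈ X ∧ z ≠ p ∧ dist m z = 1 := by
    intro m hm p
    have h2 : 2 ≤ (D m).card := hdl m hm
    have hne : ((D m).erase p).Nonempty := by
      rw [← Finset.card_pos]
      have := Finset.card_erase_of_mem (s := D m) (a := p)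
      by_cases hp : p ∈ D m
      · rw [Finset.card_erase_of_mem hp]; omega
      · rw [Finset.erase_eq_of_notMem hp]; omega
    obtain ⟨z, hz⟩ := hne
    rw [Finset.mem_erase] at hz
    obtain ⟨hz1, hz2⟩ := hz
    rw [hmemD] at hz2
    exact ⟨z, hz2.1, hz1, hz2.2⟩
  -- degree exactly two
  have hdeg : ∀ p ∈ X, (D p).card = 2 := by
    intro p hp
    refine le_antisymm ?_ (hdl p hp)
    by_contra hgt
    push_neg at hgt
    obtain ⟨t, hts, htc⟩ := Finset.exists_subset_card_eq (show 3 ≤ (D p).card from hgt)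
    obtain ⟨y1, y2, y3, n12, n13, n23, ht⟩ := Finset.card_eq_three.1 htc
    have hy1 : y1 ∈ D p := hts (by rw [ht]; simp)
    have hy2 : y2 ∈ D p := hts (by rw [ht]; simp)
    have hy3 : y3 ∈ D p := hts (by rw [ht]; simp)
    rw [hmemD] at hy1 hy2 hy3
    refine no_three p y1 y2 y3 hy1.2 hy2.2 hy3.2
      (hdist y1 hy1.1 y2 hy2.1) (hdist y1 hy1.1 y3 hy3.1) (hdist y2 hy2.1 y3 hy3.1)
      n12 n13 n23 ?_
    intro m hm
    have hmX : m ∈ X := by rcases hm with rfl | rfl | rfl; exacts [hy1.1, hy2.1, hy3.1]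
    obtain ⟨z, hzX, hzp, hzd⟩ := hnbgen m hmX p
    exact ⟨z, hzp, hzd, hdist z hzX p hp, hdist z hzX y1 hy1.1,
      hdist z hzX y2 hy2.1, hdist z hzX y3 hy3.1⟩
  -- pick an edge A-B and the second neighbors A', B'
  obtain ⟨A, hAX⟩ := Finset.card_pos.1 (show 0 < X.card by omega)
  obtain ⟨B, A', hBA', hDA⟩ := Finset.card_eq_two.1 (hdeg A hAX)
  have hBDA : B ∈ D A := by rw [hDA]; simp
  have hA'DA : A' ∈ D A := by rw [hDA]; simp
  rw [hmemD] at hBDA hA'DA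
  obtain ⟨hBX, distAB⟩ := hBDA
  obtain ⟨hA'X, distAA'⟩ := hA'DA
  have hADB : A ∈ D B := (hmemD B A).2 ⟨hAX, by rw [dist_comm]; exact distAB⟩
  obtain ⟨c, d, hcd, hDB⟩ := Finset.card_eq_two.1 (hdeg B hBX)
  have hAcd : A = c ∨ A = d := by
    have := hADB; rw [hDB] at this; simpa using this
  have hexB' : ∃ B', B' ≠ A ∧ D B = {A, B'} := by
    rcases hAcd with rfl | rfl
    · exact ⟨d, fun h => hcd h.symm, hDB⟩
    · exact ⟨c, fun h => hcd h, by rw [hDB, Finset.pair_comm]⟩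
  obtain ⟨B', hB'A, hDBeq⟩ := hexB'
  have hB'DB : B' ∈ D B := by rw [hDBeq]; simp
  rw [hmemD] at hB'DB
  obtain ⟨hB'X, distBB'⟩ := hB'DB
  have hABne : A ≠ B := by
    intro h; rw [h] at distAB; simp at distAB
  have hA'A : A' ≠ A := by
    intro h; rw [h] at distAA'; simp at distAA'
  have hB'B : B' ≠ B := by
    intro h; rw [h] at distBB'; simp at distBB'
  set X' := (X.erase A).erase B with hX'def
  have hmemX' : ∀ v, v ∈ X' ↔ v ∈ X ∧ v ≠ A ∧ v ≠ B := by
    intro v; rw [hX'def]; simp [Finset.mem_erase]; tauto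
  have hA'X' : A' ∈ X' := (hmemX' A').2 ⟨hA'X, hA'A, hBA'.symm⟩
  have hB'X' : B' ∈ X' := (hmemX' B').2 ⟨hB'X, hB'A, hB'B⟩
  -- sign functional
  have F1 : ∀ v ∈ X', LL A B v ≠ 0 := by
    intro v hv
    rw [hmemX'] at hv
    obtain ⟨hvX, hvA, hvB⟩ := hv
    obtain ⟨w, hwX, hwv, hwd⟩ := hnbgen v hvX v
    exact off_line A B v w distAB (hdist v hvX A hAX) (hdist v hvX B hBX) hwd
      (hdist w hwX A hAX) (hdist w hwX B hBX) hvA hvB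
  have F2 : ∀ v ∈ X', ∀ w ∈ X', dist v w = 1 → LL A B v * LL A B w < 0 := by
    intro v hv w hw hd
    have hvX := ((hmemX' v).1 hv).1
    have hwX := ((hmemX' w).1 hw).1
    exact opp_sides A B v w distAB hd (hdist v hvX A hAX) (hdist v hvX B hBX)
      (hdist w hwX A hAX) (hdist w hwX B hBX) (F1 v hv) (F1 w hw)
  have F3 : A' ≠ B' → 0 < LL A B A' * LL A B B' := by
    intro hne
    rcases lt_trichotomy (LL A B A' * LL A B B') 0 with h | h | h
    · exfalso
      refine half_contra A B A' B' distAB h ?_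
      exact seg_inter A A' B B' distAA' distBB' (by rw [dist_comm]; exact hdist A hAX B hBX)
        (hdist B hBX A' hA'X) (hdist B' hB'X A hAX) (hdist B' hB'X A' hA'X)
    · exact absurd (mul_eq_zero.1 h) (by push_neg; exact ⟨F1 A' hA'X', F1 B' hB'X'⟩)
    · exact h
  -- the positive / negative sides
  set P := X'.filter (fun v => 0 < LL A B v) with hPdef
  set Nn := X'.filter (fun v => LL A B v < 0) with hNdef
  have hPmem : ∀ v, v ∈ P ↔ v ∈ X' ∧ 0 < LL A B v := by
    intro v; rw [hPdef]; exact Finset.mem_filter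
  have hNmem : ∀ v, v ∈ Nn ↔ v ∈ X' ∧ LL A B v < 0 := by
    intro v; rw [hNdef]; exact Finset.mem_filter
  have hPsub : P ⊆ X' := Finset.filter_subset _ _
  have hNsub : Nn ⊆ X' := Finset.filter_subset _ _
  have hsplit : P.card + Nn.card = X'.card := by
    have hcongr : Nn = X'.filter (fun v => ¬ 0 < LL A B v) := by
      apply Finset.filter_congr
      intro v hv
      constructor
      · intro h; linarith
      · intro h
        rcases lt_trichotomy (LL A B v) 0 with h' | h' | h'
        · exact h'
        · exact absurd h' (F1 v hv)
        · exact absurd h' h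
    rw [hcongr]
    exact Finset.card_filter_add_card_filter_not _
  have hX'card : X'.card + 2 = X.card := by
    rw [hX'def]
    rw [Finset.card_erase_of_mem (Finset.mem_erase.2 ⟨hABne.symm, hBX⟩),
      Finset.card_erase_of_mem hAX]
    omega
  -- characterization of neighbors A and B
  have hAD : ∀ v ∈ X', (A ∈ D v ↔ v = A') := by
    intro v hv
    obtain ⟨hvX, hvA, hvB⟩ := (hmemX' v).1 hv
    constructor
    · intro h
      have : v ∈ D A := (hmemD A v).2 ⟨hvX, by rw [dist_comm]; exact ((hmemD v A).1 h).2⟩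
      rw [hDA] at this; simp at this
      rcases this with h' | h'
      · exact absurd h' hvB
      · exact h'
    · intro h
      rw [h]
      exact (hmemD A' A).2 ⟨hAX, by rw [dist_comm]; exact distAA'⟩
  have hBD : ∀ v ∈ X', (B ∈ D v ↔ v = B') := by
    intro v hv
    obtain ⟨hvX, hvA, hvB⟩ := (hmemX' v).1 hv
    constructor
    · intro h
      have : v ∈ D B := (hmemD B v).2 ⟨hvX, by rw [dist_comm]; exact ((hmemD v B).1 h).2⟩
      rw [hDBeq] at this; simp at this
      rcases this with h' | h'
      · exact absurd h' hvA
      · exact h'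
    · intro h
      rw [h]
      exact (hmemD B' B).2 ⟨hBX, by rw [dist_comm]; exact distBB'⟩
  have hDX' : ∀ v ∈ X', D v ∩ X' = ((D v).erase A).erase B := by
    intro v hv
    ext q
    simp only [Finset.mem_inter, Finset.mem_erase, hmemX']
    constructor
    · rintro ⟨h1, _, h3, h4⟩; exact ⟨h4, h3, h1⟩
    · rintro ⟨h1, h2, h3⟩; exact ⟨h3, ((hmemD v q).1 h3).1, h2, h1⟩
  have key : ∀ v ∈ X',
      (((D v).erase A).erase B).card + ((if v = A' then 1 else 0) + (if v = B' then 1 else 0)) = 2 := by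
    intro v hv
    have hvX := ((hmemX' v).1 hv).1
    have hdv := hdeg v hvX
    by_cases h1 : v = A' <;> by_cases h2 : v = B'
    · rw [if_pos h1, if_pos h2]
      have hA : A ∈ D v := (hAD v hv).2 h1
      have hB : B ∈ (D v).erase A := Finset.mem_erase.2 ⟨hABne.symm, (hBD v hv).2 h2⟩
      rw [Finset.card_erase_of_mem hB, Finset.card_erase_of_mem hA, hdv]
    · rw [if_pos h1, if_neg h2]
      have hA : A ∈ D v := (hAD v hv).2 h1
      have hB : B ∉ (D v).erase A := fun h => h2 ((hBD v hv).1 (Finset.mem_of_mem_erase h))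
      rw [Finset.erase_eq_of_notMem hB, Finset.card_erase_of_mem hA, hdv]
    · rw [if_neg h1, if_pos h2]
      have hA : A ∉ D v := fun h => h1 ((hAD v hv).1 h)
      have hB : B ∈ (D v).erase A := by
        rw [Finset.erase_eq_of_notMem hA]; exact (hBD v hv).2 h2
      rw [Finset.card_erase_of_mem hB, Finset.erase_eq_of_notMem hA, hdv]
    · rw [if_neg h1, if_neg h2]
      have hA : A ∉ D v := fun h => h1 ((hAD v hv).1 h)
      have hB : B ∉ (D v).erase A := fun h => h2 ((hBD v hv).1 (Finset.mem_of_mem_erase h))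
      rw [Finset.erase_eq_of_notMem hB, Finset.erase_eq_of_notMem hA, hdv]
  -- cross-edges go between P and Nn
  have hedgeP : ∀ v ∈ P, D v ∩ X' = Nn.filter (fun w => dist v w = 1) := by
    intro v hv
    have hvP := ((hPmem v).1 hv).2
    ext q
    constructor
    · intro hq
      obtain ⟨h1, h2⟩ := Finset.mem_inter.1 hq
      have hd := ((hmemD v q).1 h1).2
      have : LL A B v * LL A B q < 0 := F2 v (hPsub hv) q h2 hd
      exact Finset.mem_filter.2 ⟨(hNmem q).2 ⟨h2, by nlinarith⟩, hd⟩
    · intro hq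
      obtain ⟨h1, h3⟩ := Finset.mem_filter.1 hq
      have h1' := (hNmem q).1 h1
      exact Finset.mem_inter.2 ⟨(hmemD v q).2 ⟨((hmemX' q).1 h1'.1).1, h3⟩, h1'.1⟩
  have hedgeN : ∀ w ∈ Nn, D w ∩ X' = P.filter (fun v => dist w v = 1) := by
    intro w hw
    have hwN := ((hNmem w).1 hw).2
    ext q
    constructor
    · intro hq
      obtain ⟨h1, h2⟩ := Finset.mem_inter.1 hq
      have hd := ((hmemD w q).1 h1).2
      have : LL A B w * LL A B q < 0 := F2 w (hNsub hw) q h2 hd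
      exact Finset.mem_filter.2 ⟨(hPmem q).2 ⟨h2, by nlinarith⟩, hd⟩
    · intro hq
      obtain ⟨h1, h3⟩ := Finset.mem_filter.1 hq
      have h1' := (hPmem q).1 h1
      exact Finset.mem_inter.2 ⟨(hmemD w q).2 ⟨((hmemX' q).1 h1'.1).1, h3⟩, h1'.1⟩
  have sum1 : ∑ v ∈ P, (D v ∩ X').card = ∑ w ∈ Nn, (D w ∩ X').card := by
    have e1 : ∀ v ∈ P, (D v ∩ X').card = ∑ w ∈ Nn, (if dist v w = 1 then 1 else 0) := by
      intro v hv; rw [hedgeP v hv, Finset.card_filter]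
    have e2 : ∀ w ∈ Nn, (D w ∩ X').card = ∑ v ∈ P, (if dist v w = 1 then 1 else 0) := by
      intro w hw; rw [hedgeN w hw, Finset.card_filter]
      apply Finset.sum_congr rfl
      intro v hv
      exact if_congr (by rw [dist_comm]) rfl rfl
    rw [Finset.sum_congr rfl e1, Finset.sum_congr rfl e2]
    exact Finset.sum_comm
  have sumP : ∑ v ∈ P, (D v ∩ X').card
      + ((if A' ∈ P then 1 else 0) + (if B' ∈ P then 1 else 0)) = 2 * P.card := by
    have e : ∀ v ∈ P, (D v ∩ X').card + ((if v = A' then 1 else 0) + (if v = B' then 1 else 0)) = 2 := by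
      intro v hv
      rw [hDX' v (hPsub hv)]
      exact key v (hPsub hv)
    have := Finset.sum_congr rfl e
    rw [Finset.sum_add_distrib, Finset.sum_add_distrib, Finset.sum_ite_eq' P A' (fun _ => 1),
      Finset.sum_ite_eq' P B' (fun _ => 1), Finset.sum_const, smul_eq_mul] at this
    omega
  have sumN : ∑ w ∈ Nn, (D w ∩ X').card
      + ((if A' ∈ Nn then 1 else 0) + (if B' ∈ Nn then 1 else 0)) = 2 * Nn.card := by
    have e : ∀ v ∈ Nn, (D v ∩ X').card + ((if v = A' then 1 else 0) + (if v = B' then 1 else 0)) = 2 := by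
      intro v hv
      rw [hDX' v (hNsub hv)]
      exact key v (hNsub hv)
    have := Finset.sum_congr rfl e
    rw [Finset.sum_add_distrib, Finset.sum_add_distrib, Finset.sum_ite_eq' Nn A' (fun _ => 1),
      Finset.sum_ite_eq' Nn B' (fun _ => 1), Finset.sum_const, smul_eq_mul] at this
    omega
  -- locations of A' and B'
  have hPN : ∀ v, v ∈ P → v ∈ Nn → False := by
    intro v h1 h2
    have e1 := ((hPmem v).1 h1).2
    have e2 := ((hNmem v).1 h2).2
    linarith
  have hA'or : A' ∈ P ∨ A' ∈ Nn := by
    rcases lt_trichotomy (LL A B A') 0 with h | h | h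
    · right; exact (hNmem A').2 ⟨hA'X', h⟩
    · exact absurd h (F1 A' hA'X')
    · left; exact (hPmem A').2 ⟨hA'X', h⟩
  have hB'or : B' ∈ P ∨ B' ∈ Nn := by
    rcases lt_trichotomy (LL A B B') 0 with h | h | h
    · right; exact (hNmem B').2 ⟨hB'X', h⟩
    · exact absurd h (F1 B' hB'X')
    · left; exact (hPmem B').2 ⟨hB'X', h⟩
  by_cases hsame : A' = B'
  · subst hsame
    rcases hA'or with h | h
    · have h1 : A' ∉ Nn := fun h' => hPN A' h h'
      simp only [h, h1, if_true, if_false] at sumP sumN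
      refine ⟨Nn.card + 1, by omega⟩
    · have h1 : A' ∉ P := fun h' => hPN A' h' h
      simp only [h, h1, if_true, if_false] at sumP sumN
      refine ⟨P.card + 1, by omega⟩
  · have hF3 := F3 hsame
    have hsame_side : (A' ∈ P ∧ B' ∈ P) ∨ (A' ∈ Nn ∧ B' ∈ Nn) := by
      rcases hA'or with h | h <;> rcases hB'or with h' | h'
      · exact Or.inl ⟨h, h'⟩
      · exfalso
        have e1 := ((hPmem A').1 h).2
        have e2 := ((hNmem B').1 h').2
        nlinarith
      · exfalso
        have e1 := ((hNmem A').1 h).2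
        have e2 := ((hPmem B').1 h').2
        nlinarith
      · exact Or.inr ⟨h, h'⟩
    rcases hsame_side with ⟨h1, h2⟩ | ⟨h1, h2⟩
    · have h3 : A' ∉ Nn := fun h' => hPN A' h1 h'
      have h4 : B' ∉ Nn := fun h' => hPN B' h2 h'
      simp only [h1, h2, h3, h4, if_true, if_false] at sumP sumN
      refine ⟨Nn.card + 1, by omega⟩
    · have h3 : A' ∉ P := fun h' => hPN A' h' h1
      have h4 : B' ∉ P := fun h' => hPN B' h' h2
      simp only [h1, h2, h3, h4, if_true, if_false] at sumP sumN
      refine ⟨P.card + 1, by omega⟩
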